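/- Assume additionally that for every x ∈ Ω̄ the function q ↦ σ(x,q) is convex and positively 1-homogeneous. Then for every x ∈ Ω̄ the infimum defining v(x) is attained: there exists an admissible curve γ for x with ∫₀¹ σ(γ(s),γ′(s)) ds = v(x). -/

import Mathlib

open Set Metric MeasureTheory

noncomputable section

abbrev Euc (n : ℕ) := EuclideanSpace ℝ (Fin n)

open intervalIntegral Filter Topology

theorem lipDerivBound {n : ℕ} {γ : ℝ → Euc n} {K : NNReal} (h : LipschitzWith K γ) (t : ℝ) :
    ‖deriv γ t‖ ≤ K := by
  by_cases hd : DifferentiableAt ℝ γ t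
  · refine hd.hasDerivAt.le_of_lip' K.coe_nonneg ?_
    filter_upwards with y using by
      simpa [dist_eq_norm] using h.dist_le_mul y t
  · simp [deriv_zero_of_not_differentiableAt hd, K.coe_nonneg]

theorem derivIntegrable {n : ℕ} {γ : ℝ → Euc n} {K : NNReal} (h : LipschitzWith K γ) (a b : ℝ) :
    IntervalIntegrable (deriv γ) volume a b := by
  refine ⟨?_, ?_⟩ <;>
  · refine Integrable.mono' (integrable_const (K : ℝ)) ((measurable_deriv γ).aestronglyMeasurable) ?_
    filter_upwards with t using lipDerivBound h t

/-- Difference quotients along a positive vanishing sequence converge to the derivative. -/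
theorem diffQuot_tendsto {n : ℕ} {γ : ℝ → Euc n} {u : ℝ} (hd : DifferentiableAt ℝ γ u)
    {e : ℕ → ℝ} (he : ∀ j, 0 < e j) (helim : Tendsto e atTop (𝓝 0)) :
    Tendsto (fun j => (e j)⁻¹ • (γ (u + e j) - γ u)) atTop (𝓝 (deriv γ u)) := by
  have h1 : Tendsto (fun j => u + e j) atTop (𝓝[≠] u) := by
    rw [tendsto_nhdsWithin_iff]
    constructor
    · simpa using (tendsto_const_nhds.add helim)
    · filter_upwards with j
      simp only [mem_compl_iff, mem_singleton_iff]
      intro h; nlinarith [he j, congrArg (fun z => z - u) h]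
  have h2 := (hasDerivAt_iff_tendsto_slope.1 hd.hasDerivAt).comp h1
  convert h2 using 2 with j
  simp [slope_def_module]

/-- FTC for Lipschitz curves. -/
theorem lipFTC {n : ℕ} {γ : ℝ → Euc n} {K : NNReal} (h : LipschitzWith K γ) {a b : ℝ}
    (hab : a ≤ b) : (∫ u in a..b, deriv γ u) = γ b - γ a := by
  have hcont : Continuous γ := h.continuous
  set e : ℕ → ℝ := fun j => ((j : ℝ) + 1)⁻¹ with he_def
  have he : ∀ j, 0 < e j := fun j => by positivity
  have helim : Tendsto e atTop (𝓝 0) := tendsto_one_div_add_atTop_nhds_zero_nat.congr (by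
    intro j; rw [he_def]; simp [one_div])
  -- Step A : integral of difference quotient
  have stepA : ∀ j, (∫ u in a..b, (e j)⁻¹ • (γ (u + e j) - γ u)) =
      (e j)⁻¹ • ((∫ u in b..(b + e j), γ u) - ∫ u in a..(a + e j), γ u) := by
    intro j
    have hInt : ∀ c d : ℝ, IntervalIntegrable γ volume c d := fun c d =>
      hcont.intervalIntegrable c d
    have hInt2 : ∀ c d : ℝ, IntervalIntegrable (fun u => γ (u + e j)) volume c d := fun c d =>
      (hcont.comp (by continuity)).intervalIntegrable c d
    rw [intervalIntegral.integral_smul, integral_sub (hInt2 a b) (hInt a b)]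
    congr 1
    have h1 : (∫ u in a..b, γ (u + e j)) = ∫ u in (a + e j)..(b + e j), γ u :=
      integral_comp_add_right γ (e j)
    have h2 : (∫ u in (a + e j)..(b + e j), γ u) =
        (∫ u in (a + e j)..a, γ u) + (∫ u in a..b, γ u) + ∫ u in b..(b + e j), γ u := by
      rw [integral_add_adjacent_intervals (hInt _ _) (hInt _ _),
        integral_add_adjacent_intervals (hInt _ _) (hInt _ _)]
    have h3 : (∫ u in (a + e j)..a, γ u) = - ∫ u in a..(a + e j), γ u :=
      integral_symm a (a + e j)
    rw [h1, h2, h3]; abel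
  -- Step B : averages converge to endpoint values
  have stepB : ∀ c : ℝ, Tendsto (fun j => (e j)⁻¹ • ∫ u in c..(c + e j), γ u) atTop (𝓝 (γ c)) := by
    intro c
    have key : ∀ j, ‖(e j)⁻¹ • (∫ u in c..(c + e j), γ u) - γ c‖ ≤ K * e j := by
      intro j
      have hval : (∫ u in c..(c + e j), (γ u - γ c)) =
          (∫ u in c..(c + e j), γ u) - (e j) • γ c := by
        rw [integral_sub (hcont.intervalIntegrable _ _) (intervalIntegrable_const),
          intervalIntegral.integral_const]
        simp
      have hb : ‖∫ u in c..(c + e j), (γ u - γ c)‖ ≤ (K * e j) * |(c + e j) - c| := by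
        apply intervalIntegral.norm_integral_le_of_norm_le_const
        intro u hu
        rw [uIoc_of_le (by linarith [he j])] at hu
        have : ‖γ u - γ c‖ ≤ K * |u - c| := by
          simpa [dist_eq_norm] using h.dist_le_mul u c
        have : |u - c| ≤ e j := by
          rw [abs_le]; constructor <;> [linarith [hu.1, he j]; linarith [hu.2]]
        nlinarith [K.coe_nonneg, (by simpa [dist_eq_norm] using h.dist_le_mul u c : ‖γ u - γ c‖ ≤ K * |u - c|)]
      have heq : (e j)⁻¹ • (∫ u in c..(c + e j), γ u) - γ c =
          (e j)⁻¹ • ∫ u in c..(c + e j), (γ u - γ c) := by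
        rw [hval, smul_sub, smul_smul, inv_mul_cancel₀ (ne_of_gt (he j)), one_smul]
      rw [add_sub_cancel_left, abs_of_pos (he j)] at hb
      rw [heq, norm_smul, norm_inv, Real.norm_eq_abs, abs_of_pos (he j)]
      calc (e j)⁻¹ * ‖∫ u in c..(c + e j), (γ u - γ c)‖ ≤ (e j)⁻¹ * ((K * e j) * e j) := by
            apply mul_le_mul_of_nonneg_left hb (le_of_lt (inv_pos.2 (he j)))
        _ = K * e j := by field_simp
    rw [tendsto_iff_norm_sub_tendsto_zero]
    apply squeeze_zero (fun j => norm_nonneg _) key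
    simpa using helim.const_mul (K : ℝ)
  -- Step C: dominated convergence
  have stepC : Tendsto (fun j => ∫ u in a..b, (e j)⁻¹ • (γ (u + e j) - γ u)) atTop
      (𝓝 (∫ u in a..b, deriv γ u)) := by
    simp only [intervalIntegral.integral_of_le hab]
    apply MeasureTheory.tendsto_integral_of_dominated_convergence (fun _ => (K : ℝ))
    · intro j
      exact ((hcont.comp (continuous_add_right _)).sub hcont |>.const_smul (e j)⁻¹).aestronglyMeasurable
    · exact integrable_const _
    · intro j
      filter_upwards with u
      rw [norm_smul, norm_inv, Real.norm_eq_abs, abs_of_pos (he j)]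
      have h2 : ‖γ (u + e j) - γ u‖ ≤ K * e j := by
        have := h.dist_le_mul (u + e j) u
        rw [dist_eq_norm, Real.dist_eq] at this
        simpa [abs_of_pos (he j)] using this
      calc (e j)⁻¹ * ‖γ (u + e j) - γ u‖ ≤ (e j)⁻¹ * (K * e j) := by
            apply mul_le_mul_of_nonneg_left h2 (le_of_lt (inv_pos.2 (he j)))
        _ = K := by field_simp [(he j).ne']
    · have hae : ∀ᵐ u ∂(volume.restrict (Ioc a b)), DifferentiableAt ℝ γ u :=
        ae_restrict_of_ae h.ae_differentiableAt
      filter_upwards [hae] with u hu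
      exact diffQuot_tendsto hu he helim
  -- combine
  have final : Tendsto (fun j => (e j)⁻¹ • ((∫ u in b..(b + e j), γ u) - ∫ u in a..(a + e j), γ u))
      atTop (𝓝 (γ b - γ a)) := by
    have := (stepB b).sub (stepB a)
    simpa [smul_sub] using this
  exact tendsto_nhds_unique (stepC.congr stepA) final

/-- Hahn–Banach for a sublinear function dominated by a multiple of the norm:
a supporting continuous linear functional at `u₀`. -/
theorem sublinear_support {n : ℕ} {N : Euc n → ℝ} {Cu : ℝ}
    (hhom : ∀ (q : Euc n) (c : ℝ), 0 ≤ c → N (c • q) = c * N q)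
    (hconv : ConvexOn ℝ (univ : Set (Euc n)) N)
    (hub : ∀ q, N q ≤ Cu * ‖q‖) (hnn : ∀ q, 0 ≤ N q) (u₀ : Euc n) :
    ∃ ℓ : Euc n →L[ℝ] ℝ, (∀ q, ℓ q ≤ N q) ∧ ℓ u₀ = N u₀ := by
  have hN0 : N 0 = 0 := by
    have := hhom 0 0 le_rfl; simpa using this
  have hadd : ∀ u v, N (u + v) ≤ N u + N v := by
    intro u v
    have h := hconv.2 (mem_univ ((2:ℝ) • u)) (mem_univ ((2:ℝ) • v))
      (by norm_num : (0:ℝ) ≤ 1/2) (by norm_num : (0:ℝ) ≤ 1/2) (by norm_num)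
    have e1 : (1/2 : ℝ) • (2:ℝ) • u + (1/2 : ℝ) • (2:ℝ) • v = u + v := by
      rw [smul_smul, smul_smul]; norm_num
    rw [e1, hhom u 2 (by norm_num), hhom v 2 (by norm_num)] at h
    simp only [smul_eq_mul] at h; linarith
  by_cases hu : u₀ = 0
  · refine ⟨0, fun q => hnn q, by simp [hu, hN0]⟩
  -- span singleton functional
  have hdom : ∀ x : (LinearPMap.mkSpanSingleton (K := ℝ) (L := ℝ) (σ := RingHom.id ℝ) u₀ (N u₀) hu).domain,
      (LinearPMap.mkSpanSingleton (K := ℝ) (L := ℝ) (σ := RingHom.id ℝ) u₀ (N u₀) hu) x ≤ N x := by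
    rintro ⟨y, hy⟩
    have hy' := hy
    rw [LinearPMap.domain_mkSpanSingleton, Submodule.mem_span_singleton] at hy'
    obtain ⟨c, hc_eq⟩ := hy'
    have happ : (LinearPMap.mkSpanSingleton (K := ℝ) (L := ℝ) (σ := RingHom.id ℝ) u₀ (N u₀) hu) ⟨y, hy⟩ = c • (N u₀) := by
      subst hc_eq
      exact LinearPMap.mkSpanSingleton'_apply _ _ _ c _
    rw [happ]
    show c • N u₀ ≤ N y
    rcases le_or_gt 0 c with hc | hc
    · have hNy : N y = c * N u₀ := by rw [← hc_eq]; exact hhom u₀ c hc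
      simp [smul_eq_mul, hNy]
    · have key : -(N u₀) ≤ N (-u₀) := by
        have := hadd u₀ (-u₀); simp only [add_neg_cancel, hN0] at this; linarith
      have h1 : N y = (-c) * N (-u₀) := by
        have hcy : y = (-c) • (-u₀) := by rw [← hc_eq]; simp
        rw [hcy, hhom (-u₀) (-c) (by linarith)]
      rw [h1]
      have : c * N u₀ ≤ (-c) * N (-u₀) := by nlinarith
      simpa using this
  obtain ⟨g, hg1, hg2⟩ := exists_extension_of_le_sublinear
    (LinearPMap.mkSpanSingleton (K := ℝ) (L := ℝ) (σ := RingHom.id ℝ) u₀ (N u₀) hu) N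
    (fun c hc x => hhom x c hc.le) hadd hdom
  have hbound : ∀ q, |g q| ≤ Cu * ‖q‖ := by
    intro q
    have h1 : g q ≤ Cu * ‖q‖ := (hg2 q).trans (hub q)
    have h2 : -(g q) ≤ Cu * ‖q‖ := by
      have := (hg2 (-q)).trans (hub (-q))
      simpa using this
    rw [abs_le]; constructor <;> linarith
  refine ⟨LinearMap.mkContinuous g Cu (fun q => by simpa using hbound q), fun q => hg2 q, ?_⟩
  have := hg1 ⟨u₀, Submodule.mem_span_singleton_self u₀⟩
  rw [LinearPMap.mkSpanSingleton_apply] at this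
  simpa using this


/-- a.e.-strong-measurability of a continuous-on function composed with a measurable map. -/
theorem aesm_comp_continuousOn {n : ℕ} {F : Euc n × Euc n → ℝ} {S : Set (Euc n × Euc n)}
    (hF : ContinuousOn F S) {g : ℝ → Euc n × Euc n} (hg : Measurable g) {A : Set ℝ}
    (hA : MeasurableSet A) (hmem : ∀ u ∈ A, g u ∈ S) :
    AEStronglyMeasurable (fun u => F (g u)) (volume.restrict A) := by
  rw [← map_comap_subtype_coe hA]
  rw [(MeasurableEmbedding.subtype_coe hA).aestronglyMeasurable_map_iff]
  have hGm : Measurable (fun u : A => (⟨g u, hmem u u.2⟩ : S)) :=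
    Measurable.subtype_mk (hg.comp measurable_subtype_coe)
  have hFc : Continuous (S.restrict F) := continuousOn_iff_continuous_restrict.mp hF
  exact ((hFc.measurable.comp hGm).stronglyMeasurable.aestronglyMeasurable)

/-- Integrability of the running cost along a Lipschitz curve. -/
theorem integrandIntegrable {n : ℕ} {σ : Euc n → Euc n → ℝ} {Ω : Set (Euc n)}
    (hσcont : ContinuousOn (fun p : Euc n × Euc n => σ p.1 p.2) (Ω ×ˢ (univ : Set (Euc n))))
    {σu : ℝ} (hσu : 0 ≤ σu) (hub : ∀ x ∈ Ω, ∀ q : Euc n, |σ x q| ≤ σu * ‖q‖)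
    {γ : ℝ → Euc n} {K : NNReal} (hγ : LipschitzWith K γ)
    (hΩ : ∀ s ∈ Icc (0:ℝ) 1, γ s ∈ Ω) {a b : ℝ} (ha : a ∈ Icc (0:ℝ) 1) (hb : b ∈ Icc (0:ℝ) 1) :
    IntervalIntegrable (fun u => σ (γ u) (deriv γ u)) volume a b := by
  rw [intervalIntegrable_iff]
  have hsub : uIoc a b ⊆ Icc 0 1 := by
    rw [uIoc_eq_union]
    rintro u (hu | hu)
    · exact ⟨le_trans ha.1 hu.1.le, le_trans hu.2 hb.2⟩
    · exact ⟨le_trans hb.1 hu.1.le, le_trans hu.2 ha.2⟩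
  have hmeas : AEStronglyMeasurable (fun u => σ (γ u) (deriv γ u)) (volume.restrict (uIoc a b)) := by
    apply aesm_comp_continuousOn hσcont
      ((hγ.continuous.measurable).prodMk (measurable_deriv γ)) measurableSet_uIoc
    intro u hu
    exact ⟨hΩ u (hsub hu), mem_univ _⟩
  refine Integrable.mono' (integrableOn_const (by rw [uIoc_eq_union]; exact (lt_of_le_of_lt (measure_union_le _ _) (by simp [ENNReal.add_lt_top, measure_Ioc_lt_top])).ne) : IntegrableOn (fun _ => σu * K) (uIoc a b) volume) hmeas ?_
  rw [ae_restrict_iff' measurableSet_uIoc]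
  filter_upwards with u hu
  calc ‖σ (γ u) (deriv γ u)‖ ≤ σu * ‖deriv γ u‖ := hub _ (hΩ u (hsub hu)) _
    _ ≤ σu * K := mul_le_mul_of_nonneg_left (lipDerivBound hγ u) hσu

/-- Integrability of `u ↦ N (deriv γ u)` for `N` continuous with linear growth. -/
theorem integrandIntegrable' {n : ℕ} {N : Euc n → ℝ} (hN : Continuous N)
    {σu : ℝ} (hσu : 0 ≤ σu) (hub : ∀ q : Euc n, |N q| ≤ σu * ‖q‖)
    {γ : ℝ → Euc n} {K : NNReal} (hγ : LipschitzWith K γ) (a b : ℝ) :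
    IntervalIntegrable (fun u => N (deriv γ u)) volume a b := by
  rw [intervalIntegrable_iff]
  refine Integrable.mono' (integrableOn_const (by rw [uIoc_eq_union]; exact (lt_of_le_of_lt (measure_union_le _ _) (by simp [ENNReal.add_lt_top, measure_Ioc_lt_top])).ne) : IntegrableOn (fun _ => σu * K) (uIoc a b) volume)
    ((hN.measurable.comp (measurable_deriv γ)).aestronglyMeasurable) ?_
  filter_upwards with u
  calc ‖N (deriv γ u)‖ ≤ σu * ‖deriv γ u‖ := hub _
    _ ≤ σu * K := mul_le_mul_of_nonneg_left (lipDerivBound hγ u) hσu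


/-- Jensen-type inequality for sublinear `N`: `N (γ b - γ a) ≤ ∫ N (γ')`. -/
theorem jensen_sublinear {n : ℕ} {N : Euc n → ℝ} (hN : Continuous N) {Cu : ℝ} (hCu : 0 ≤ Cu)
    (hhom : ∀ (q : Euc n) (c : ℝ), 0 ≤ c → N (c • q) = c * N q)
    (hconv : ConvexOn ℝ (univ : Set (Euc n)) N)
    (hub : ∀ q, N q ≤ Cu * ‖q‖) (hnn : ∀ q, 0 ≤ N q)
    {γ : ℝ → Euc n} {K : NNReal} (hγ : LipschitzWith K γ) {a b : ℝ} (hab : a ≤ b) :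
    N (γ b - γ a) ≤ ∫ u in a..b, N (deriv γ u) := by
  obtain ⟨ℓ, hℓle, hℓeq⟩ := sublinear_support hhom hconv hub hnn (γ b - γ a)
  have habs : ∀ q, |N q| ≤ Cu * ‖q‖ := fun q => by
    rw [abs_of_nonneg (hnn q)]; exact hub q
  have hint : (∫ u in a..b, ℓ (deriv γ u)) = ℓ (∫ u in a..b, deriv γ u) :=
    ℓ.intervalIntegral_comp_comm (derivIntegrable hγ a b)
  have step1 : N (γ b - γ a) = ∫ u in a..b, ℓ (deriv γ u) := by
    rw [hint, lipFTC hγ hab, hℓeq]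
  rw [step1]
  apply intervalIntegral.integral_mono_on hab ?_ ?_ (fun u _ => hℓle _)
  · exact integrandIntegrable' (map_continuous ℓ) (norm_nonneg ℓ)
      (fun q => by simpa [Real.norm_eq_abs] using ℓ.le_opNorm q) hγ a b
  · exact integrandIntegrable' hN hCu habs hγ a b


/-- Inverse of a monotone Lipschitz "cost profile" `F` on `[0,1]`. -/
theorem profile_inverse {F : ℝ → ℝ} {C c : ℝ} (hC : 0 < C) (hc : 0 ≤ c)
    (hF0 : F 0 = 0) (hF1 : F 1 = c)
    (hlip : ∀ t ∈ Icc (0:ℝ) 1, ∀ t' ∈ Icc (0:ℝ) 1, t ≤ t' → F t' - F t ≤ C * (t' - t)) :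
    ∃ s : ℝ → ℝ, (∀ t ∈ Icc (0:ℝ) 1, s t ∈ Icc (0:ℝ) 1) ∧
      (∀ t ∈ Icc (0:ℝ) 1, F (s t) = t * c) ∧
      (∀ t ∈ Icc (0:ℝ) 1, ∀ t' ∈ Icc (0:ℝ) 1, t ≤ t' → s t ≤ s t') ∧ s 0 = 0 ∧ s 1 = 1 := by
  set A : ℝ → Set ℝ := fun t => {u | u ∈ Icc (0:ℝ) 1 ∧ t * c ≤ F u} with hA
  have hmemA1 : ∀ t ∈ Icc (0:ℝ) 1, (1:ℝ) ∈ A t := by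
    intro t ht
    exact ⟨⟨zero_le_one, le_rfl⟩, by rw [hF1]; nlinarith [ht.1, ht.2]⟩
  have hbdd : ∀ t, BddBelow (A t) := fun t => ⟨0, fun u hu => hu.1.1⟩
  refine ⟨fun t => if t < 1 then sInf (A t) else 1, ?_, ?_, ?_, ?_, ?_⟩
  case refine_4 =>
    simp only [if_pos zero_lt_one]
    apply le_antisymm
    · exact csInf_le (hbdd 0) ⟨⟨le_rfl, zero_le_one⟩, by simp [hF0]⟩
    · exact le_csInf ⟨1, hmemA1 0 ⟨le_rfl, zero_le_one⟩⟩ (fun u hu => hu.1.1)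
  case refine_5 => simp
  case refine_1 =>
    intro t ht
    by_cases h1 : t < 1
    · simp only [if_pos h1]
      constructor
      · exact le_csInf ⟨1, hmemA1 t ht⟩ (fun u hu => hu.1.1)
      · exact csInf_le (hbdd t) (hmemA1 t ht)
    · simp only [if_neg h1]; exact ⟨zero_le_one, le_rfl⟩
  case refine_2 =>
    intro t ht
    by_cases h1 : t < 1
    · simp only [if_pos h1]
      set sA := sInf (A t) with hsA
      have hsA_mem : sA ∈ Icc (0:ℝ) 1 :=
        ⟨le_csInf ⟨1, hmemA1 t ht⟩ (fun u hu => hu.1.1), csInf_le (hbdd t) (hmemA1 t ht)⟩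
      have hge : t * c ≤ F sA := by
        apply le_of_forall_pos_le_add
        intro ε hε
        have hex : ∃ a ∈ A t, a < sA + ε / C := by
          by_contra hcon
          push_neg at hcon
          have : sA + ε / C ≤ sA := le_csInf ⟨1, hmemA1 t ht⟩ (fun u hu => hcon u hu)
          nlinarith [div_pos hε hC]
        obtain ⟨a, haA, ha⟩ := hex
        have h2 : sA ≤ a := csInf_le (hbdd t) haA
        have h3 : F a - F sA ≤ C * (a - sA) := hlip sA hsA_mem a haA.1 h2
        have : C * (a - sA) ≤ ε := by
          have : a - sA < ε / C := by linarith
          calc C * (a - sA) ≤ C * (ε / C) := by nlinarith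
            _ = ε := by field_simp
        linarith [haA.2]
      have hle : F sA ≤ t * c := by
        by_contra hcon
        push_neg at hcon
        have hsA_pos : 0 < sA := by
          rcases lt_or_eq_of_le hsA_mem.1 with h | h
          · exact h
          · exfalso; rw [← h] at hcon; rw [hF0] at hcon; nlinarith [ht.1]
        set d := (F sA - t * c) / C with hd
        have hd_pos : 0 < d := div_pos (by linarith) hC
        set a' := max 0 (sA - d) with ha'
        have ha'_lt : a' < sA := by
          rw [ha']; apply max_lt hsA_pos (by linarith)
        have ha'_mem : a' ∈ Icc (0:ℝ) 1 := ⟨le_max_left _ _, le_trans ha'_lt.le hsA_mem.2⟩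
        have hFa' : t * c ≤ F a' := by
          have h4 : F sA - F a' ≤ C * (sA - a') := hlip a' ha'_mem sA hsA_mem ha'_lt.le
          have h5 : sA - a' ≤ d := by
            rw [ha']; have := le_max_right 0 (sA - d); linarith
          have : C * (sA - a') ≤ C * d := by nlinarith
          have hCd : C * d = F sA - t * c := by rw [hd]; field_simp
          linarith
        have : sA ≤ a' := csInf_le (hbdd t) ⟨ha'_mem, hFa'⟩
        linarith
      linarith
    · simp only [if_neg h1]
      have : t = 1 := le_antisymm ht.2 (not_lt.mp h1)
      rw [hF1, this, one_mul]
  case refine_3 =>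
    intro t ht t' ht' htt'
    by_cases h1 : t' < 1
    · have h2 : t < 1 := lt_of_le_of_lt htt' h1
      simp only [if_pos h1, if_pos h2]
      apply csInf_le_csInf (hbdd t) ⟨1, hmemA1 t' ht'⟩
      intro u hu
      exact ⟨hu.1, le_trans (by nlinarith) hu.2⟩
    · simp only [if_neg h1]
      by_cases h2 : t < 1
      · simp only [if_pos h2]
        exact csInf_le (hbdd t) (hmemA1 t ht)
      · simp only [if_neg h2]; exact le_rfl


/-- An admissible curve for the point `x`: a Lipschitz curve `γ : [0,1] → ℝⁿ` with values
in `Ω̄`, starting in `V̄₀` and ending at `x`. -/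
def IsAdmissible {n : ℕ} (Ω V₀ : Set (Euc n)) (x : Euc n) (γ : ℝ → Euc n) : Prop :=
  (∃ K : NNReal, LipschitzWith K γ) ∧ (∀ s ∈ Icc (0:ℝ) 1, γ s ∈ Ω) ∧ γ 0 ∈ V₀ ∧ γ 1 = x

/-- The cost of a curve: `∫₀¹ σ(γ(s), γ′(s)) ds`. -/
def curveCost {n : ℕ} (σ : Euc n → Euc n → ℝ) (γ : ℝ → Euc n) : ℝ :=
  ∫ s in (0:ℝ)..1, σ (γ s) (deriv γ s)

/-- The time-of-attachment function: infimum of costs over admissible curves. -/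
def timeOfAttachment {n : ℕ} (Ω V₀ : Set (Euc n)) (σ : Euc n → Euc n → ℝ) (x : Euc n) : ℝ :=
  sInf (curveCost σ '' {γ : ℝ → Euc n | IsAdmissible Ω V₀ x γ})

/-- The geodesic distance on `Ω̄`. -/
def geodDist {n : ℕ} (Ω : Set (Euc n)) (x y : Euc n) : ℝ :=
  sInf {L : ℝ | ∃ γ : ℝ → Euc n, (∃ K : NNReal, LipschitzWith K γ) ∧
    (∀ s ∈ Icc (0:ℝ) 1, γ s ∈ Ω) ∧ γ 0 = y ∧ γ 1 = x ∧
    L = ∫ s in (0:ℝ)..1, ‖deriv γ s‖}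

set_option maxHeartbeats 2000000

/-- If moreover q ↦ σ(x,q) is convex and positively 1-homogeneous for
every x ∈ Ω̄, then the infimum defining v(x) is attained by an admissible curve. -/
theorem existence_of_optimal_curves
    {n : ℕ} (hn : 1 ≤ n)
    (Ω V₀ : Set (Euc n)) (hΩne : Ω.Nonempty) (hΩcl : IsClosed Ω)
    (hV₀ne : V₀.Nonempty) (hV₀cl : IsClosed V₀) (hV₀sub : V₀ ⊆ Ω)
    (σl σu : ℝ) (hσl : 0 < σl) (hσlu : σl ≤ σu)
    (σ : Euc n → Euc n → ℝ)
    (hσcont : ContinuousOn (fun p : Euc n × Euc n => σ p.1 p.2) (Ω ×ˢ (univ : Set (Euc n))))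
    (hσbound : ∀ x ∈ Ω, ∀ q : Euc n, σl * ‖q‖ ≤ σ x q ∧ σ x q ≤ σu * ‖q‖)
    (hadm : ∀ x ∈ Ω, ∃ γ : ℝ → Euc n, IsAdmissible Ω V₀ x γ)
    (v : Euc n → ℝ) (hvnonneg : ∀ x ∈ Ω, 0 ≤ v x)
    (hv : ∀ x ∈ Ω, v x = timeOfAttachment Ω V₀ σ x)
    (hσconv : ∀ x ∈ Ω, ConvexOn ℝ (univ : Set (Euc n)) (σ x))
    (hσhom : ∀ x ∈ Ω, ∀ q : Euc n, ∀ c : ℝ, 0 ≤ c → σ x (c • q) = c * σ x q) :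
    ∀ x ∈ Ω, ∃ γ : ℝ → Euc n, IsAdmissible Ω V₀ x γ ∧ curveCost σ γ = v x := by
  have hσu : 0 ≤ σu := le_trans hσl.le hσlu
  -- general facts about σ
  have hσnn : ∀ y ∈ Ω, ∀ q : Euc n, 0 ≤ σ y q := fun y hy q =>
    le_trans (by positivity) (hσbound y hy q).1
  have hσabs : ∀ y ∈ Ω, ∀ q : Euc n, |σ y q| ≤ σu * ‖q‖ := fun y hy q => by
    rw [abs_of_nonneg (hσnn y hy q)]; exact (hσbound y hy q).2
  have hσ0 : ∀ y ∈ Ω, σ y 0 = 0 := fun y hy => le_antisymm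
    (by simpa using (hσbound y hy 0).2) (by simpa using (hσbound y hy 0).1)
  have hslice : ∀ y ∈ Ω, Continuous (fun q : Euc n => σ y q) := by
    intro y hy
    rw [← continuousOn_univ]
    exact hσcont.comp
      ((continuous_const.prodMk continuous_id).continuousOn :
        ContinuousOn (fun q : Euc n => (y, q)) univ)
      (fun q _ => ⟨hy, mem_univ _⟩)
  -- nonnegativity of cost of any admissible curve
  intro x hx
  set S := curveCost σ '' {γ : ℝ → Euc n | IsAdmissible Ω V₀ x γ} with hSdef
  have hSnonneg : ∀ y ∈ S, 0 ≤ y := by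
    rintro y ⟨γ, hγ, rfl⟩
    apply intervalIntegral.integral_nonneg zero_le_one
    intro u hu
    exact hσnn _ (hγ.2.1 u hu) _
  have hSbdd : BddBelow S := ⟨0, hSnonneg⟩
  have hSne : S.Nonempty := by
    obtain ⟨γ, hγ⟩ := hadm x hx
    exact ⟨curveCost σ γ, ⟨γ, hγ, rfl⟩⟩
  set m := v x with hm
  have hm_eq : m = sInf S := hv x hx
  have hm0 : 0 ≤ m := hvnonneg x hx
  -- minimizing sequence
  have hminseq : ∀ k : ℕ, ∃ γ : ℝ → Euc n, IsAdmissible Ω V₀ x γ ∧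
      curveCost σ γ < m + 1/(k+1) := by
    intro k
    have hpos : (0:ℝ) < 1/(k+1) := by positivity
    obtain ⟨y, hyS, hy⟩ := exists_lt_of_csInf_lt hSne
      (by rw [← hm_eq]; exact lt_add_of_pos_right m hpos)
    obtain ⟨γ, hγ, rfl⟩ := hyS
    exact ⟨γ, hγ, hy⟩
  choose Γ hΓadm hΓcost using hminseq
  choose K hK using fun k => (hΓadm k).1
  have hΓΩ : ∀ k, ∀ u ∈ Icc (0:ℝ) 1, Γ k u ∈ Ω := fun k => (hΓadm k).2.1
  set ck : ℕ → ℝ := fun k => curveCost σ (Γ k) with hck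
  have hck_lb : ∀ k, m ≤ ck k := fun k => by
    rw [hm_eq]; exact csInf_le hSbdd ⟨Γ k, hΓadm k, rfl⟩
  have hck_ub : ∀ k, ck k < m + 1/(k+1) := hΓcost
  have hck_ub1 : ∀ k, ck k ≤ m + 1 := fun k => by
    have h1 : (1:ℝ)/(k+1) ≤ 1 := by
      rw [div_le_one (by positivity)]; push_cast; linarith [Nat.cast_nonneg (α := ℝ) k]
    linarith [hck_ub k]
  have hck0 : ∀ k, 0 ≤ ck k := fun k => le_trans hm0 (hck_lb k)
  -- running cost and its primitive
  set f : ℕ → ℝ → ℝ := fun k u => σ (Γ k u) (deriv (Γ k) u) with hf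
  have hf_int : ∀ k, ∀ a ∈ Icc (0:ℝ) 1, ∀ b ∈ Icc (0:ℝ) 1,
      IntervalIntegrable (f k) volume a b := fun k a ha b hb =>
    integrandIntegrable hσcont hσu hσabs (hK k) (hΓΩ k) ha hb
  have hf_nn : ∀ k, ∀ u ∈ Icc (0:ℝ) 1, 0 ≤ f k u := fun k u hu =>
    hσnn _ (hΓΩ k u hu) _
  set F : ℕ → ℝ → ℝ := fun k t => ∫ u in (0:ℝ)..t, f k u with hF
  have hF_add : ∀ k, ∀ a ∈ Icc (0:ℝ) 1, ∀ b ∈ Icc (0:ℝ) 1, a ≤ b →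
      F k b - F k a = ∫ u in a..b, f k u := by
    intro k a ha b hb hab
    have := intervalIntegral.integral_add_adjacent_intervals
      (hf_int k 0 ⟨le_rfl, zero_le_one⟩ a ha) (hf_int k a ha b hb)
    simp only [hF]; linarith [this]
  have hF_bound : ∀ k, ∀ a ∈ Icc (0:ℝ) 1, ∀ b ∈ Icc (0:ℝ) 1, a ≤ b →
      F k b - F k a ≤ (σu * K k + 1) * (b - a) := by
    intro k a ha b hb hab
    rw [hF_add k a ha b hb hab]
    have hb1 : ‖∫ u in a..b, f k u‖ ≤ (σu * K k) * |b - a| := by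
      apply intervalIntegral.norm_integral_le_of_norm_le_const
      intro u hu
      rw [uIoc_of_le hab] at hu
      have huI : u ∈ Icc (0:ℝ) 1 := ⟨le_trans ha.1 hu.1.le, le_trans hu.2 hb.2⟩
      calc ‖f k u‖ ≤ σu * ‖deriv (Γ k) u‖ := hσabs _ (hΓΩ k u huI) _
        _ ≤ σu * K k := mul_le_mul_of_nonneg_left (lipDerivBound (hK k) u) hσu
    rw [Real.norm_eq_abs, abs_of_nonneg (sub_nonneg.2 hab)] at hb1
    have h2 : (∫ u in a..b, f k u) ≤ |∫ u in a..b, f k u| := le_abs_self _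
    nlinarith [sub_nonneg.2 hab, mul_nonneg hσu (K k).coe_nonneg]
  -- norm of derivative is dominated by running cost
  have hnormf : ∀ k, ∀ u ∈ Icc (0:ℝ) 1, σl * ‖deriv (Γ k) u‖ ≤ f k u := fun k u hu =>
    (hσbound _ (hΓΩ k u hu) _).1
  have hnorm_int : ∀ (k : ℕ) (a b : ℝ),
      IntervalIntegrable (fun u => ‖deriv (Γ k) u‖) volume a b := fun k a b =>
    integrandIntegrable' continuous_norm zero_le_one
      (fun q => by simp) (hK k) a b
  -- total variation bound: displacement is controlled by cost difference
  have hEuc : ∀ k, ∀ a ∈ Icc (0:ℝ) 1, ∀ b ∈ Icc (0:ℝ) 1, a ≤ b →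
      σl * ‖Γ k b - Γ k a‖ ≤ F k b - F k a := by
    intro k a ha b hb hab
    rw [hF_add k a ha b hb hab]
    have h1 : ‖Γ k b - Γ k a‖ ≤ ∫ u in a..b, ‖deriv (Γ k) u‖ := by
      rw [← lipFTC (hK k) hab]
      exact intervalIntegral.norm_integral_le_integral_norm hab
    have h2 : (∫ u in a..b, σl * ‖deriv (Γ k) u‖) ≤ ∫ u in a..b, f k u := by
      apply intervalIntegral.integral_mono_on hab ((hnorm_int k a b).const_mul σl)
        (hf_int k a ha b hb)
      intro u hu
      exact hnormf k u ⟨le_trans ha.1 hu.1, le_trans hu.2 hb.2⟩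
    rw [intervalIntegral.integral_const_mul] at h2
    nlinarith [norm_nonneg (Γ k b - Γ k a)]
  -- the inverse profile maps
  have hprof : ∀ k, ∃ s : ℝ → ℝ, (∀ t ∈ Icc (0:ℝ) 1, s t ∈ Icc (0:ℝ) 1) ∧
      (∀ t ∈ Icc (0:ℝ) 1, F k (s t) = t * ck k) ∧
      (∀ t ∈ Icc (0:ℝ) 1, ∀ t' ∈ Icc (0:ℝ) 1, t ≤ t' → s t ≤ s t') ∧ s 0 = 0 ∧ s 1 = 1 := by
    intro k
    apply profile_inverse (by positivity : (0:ℝ) < σu * K k + 1) (hck0 k)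
    · simp [hF]
    · simp only [hF, hck, curveCost]; rfl
    · exact hF_bound k
  choose st hst_mem hst_val hst_mono hst0 hst1 using hprof
  -- clamping
  set cl : ℝ → ℝ := fun t => max 0 (min 1 t) with hcl
  have hcl_mem : ∀ t, cl t ∈ Icc (0:ℝ) 1 := fun t =>
    ⟨le_max_left _ _, max_le zero_le_one (min_le_left _ _)⟩
  have hcl_of_mem : ∀ t ∈ Icc (0:ℝ) 1, cl t = t := fun t ht => by
    rw [hcl]; simp only [min_eq_right ht.2, max_eq_right ht.1]
  have hcl_mono : ∀ s t : ℝ, s ≤ t → cl s ≤ cl t := fun s t hst =>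
    max_le_max le_rfl (min_le_min le_rfl hst)
  have hcl_lip : ∀ s t : ℝ, s ≤ t → cl t - cl s ≤ t - s := by
    intro s t hst
    have hmin : min 1 t - min 1 s ≤ t - s := by
      rcases le_total 1 t with h1 | h1 <;> rcases le_total 1 s with h2 | h2 <;>
        simp [min_eq_left, min_eq_right, h1, h2] <;> linarith
    have hminmono : min 1 s ≤ min 1 t := min_le_min le_rfl hst
    rw [hcl]
    rcases le_total (min 1 s) 0 with h2 | h2 <;> rcases le_total (min 1 t) 0 with h3 | h3 <;>
      simp only [max_eq_left, max_eq_right, h2, h3] <;> linarith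
  -- the reparametrized approximating maps
  set p : ℕ → ℝ → Euc n := fun k t => Γ k (st k (cl t)) with hp
  have hpΩ : ∀ k t, p k t ∈ Ω := fun k t => hΓΩ k _ (hst_mem k _ (hcl_mem t))
  have hp0 : ∀ k, p k 0 ∈ V₀ := by
    intro k
    have : cl 0 = 0 := hcl_of_mem 0 ⟨le_rfl, zero_le_one⟩
    rw [hp]; simp only [this, hst0]
    exact (hΓadm k).2.2.1
  have hp1 : ∀ k, p k 1 = x := by
    intro k
    have : cl 1 = 1 := hcl_of_mem 1 ⟨zero_le_one, le_rfl⟩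
    rw [hp]; simp only [this, hst1]
    exact (hΓadm k).2.2.2
  set L : ℝ := (m + 1) / σl with hL
  have hL0 : 0 ≤ L := div_nonneg (by linarith) hσl.le
  have hp_dist : ∀ k, ∀ s t : ℝ, s ≤ t → σl * ‖p k t - p k s‖ ≤ (t - s) * ck k := by
    intro k s t hstle
    have h1 : cl s ≤ cl t := hcl_mono s t hstle
    have h2 : st k (cl s) ≤ st k (cl t) := hst_mono k _ (hcl_mem s) _ (hcl_mem t) h1
    have h3 := hEuc k _ (hst_mem k _ (hcl_mem s)) _ (hst_mem k _ (hcl_mem t)) h2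
    rw [hst_val k _ (hcl_mem s), hst_val k _ (hcl_mem t)] at h3
    have h4 : (cl t - cl s) * ck k ≤ (t - s) * ck k :=
      mul_le_mul_of_nonneg_right (hcl_lip s t hstle) (hck0 k)
    calc σl * ‖p k t - p k s‖ ≤ cl t * ck k - cl s * ck k := h3
      _ = (cl t - cl s) * ck k := by ring
      _ ≤ (t - s) * ck k := h4
  have hp_dist' : ∀ k, ∀ s t : ℝ, s ≤ t → ‖p k t - p k s‖ ≤ L * (t - s) := by
    intro k s t hstle
    have h1 := hp_dist k s t hstle
    have h2 : (t - s) * ck k ≤ (t - s) * (m + 1) :=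
      mul_le_mul_of_nonneg_left (hck_ub1 k) (by linarith)
    rw [hL, div_mul_eq_mul_div, le_div_iff₀ hσl]
    nlinarith
  have hp_clamp : ∀ k t, p k t = p k (cl t) := by
    intro k t
    rw [hp]
    simp only
    rw [hcl_of_mem _ (hcl_mem t)]
  have hp_ball : ∀ k t, p k t ∈ closedBall x L := by
    intro k t
    rw [mem_closedBall, dist_eq_norm, hp_clamp k t, norm_sub_rev]
    have h := hp_dist' k (cl t) 1 (hcl_mem t).2
    rw [hp1 k] at h
    calc ‖x - p k (cl t)‖ ≤ L * (1 - cl t) := h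
      _ ≤ L := by nlinarith [(hcl_mem t).1, hL0]
  -- compact container
  set Bs : Set (Euc n) := Ω ∩ closedBall x (L + 2) with hBs
  have hBcpt : IsCompact Bs := (isCompact_closedBall x (L + 2)).inter_left hΩcl
  have hpB : ∀ k t, p k t ∈ Bs := fun k t =>
    ⟨hpΩ k t, closedBall_subset_closedBall (by linarith) (hp_ball k t)⟩
  -- ultrafilter limit
  set U : Ultrafilter ℕ := Ultrafilter.of atTop with hU
  have hUle : (U : Filter ℕ) ≤ atTop := Ultrafilter.of_le _
  have hγex : ∀ t : ℝ, ∃ y ∈ Bs, Tendsto (fun k => p k t) U (𝓝 y) := by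
    intro t
    obtain ⟨y, hyB, hy⟩ := hBcpt.ultrafilter_le_nhds (U.map (fun k => p k t))
      (by rw [le_principal_iff, Ultrafilter.coe_map, mem_map]
          exact Filter.univ_mem' (fun k => hpB k t))
    exact ⟨y, hyB, hy⟩
  choose γ hγB hγt using hγex
  -- ck tends to m along the ultrafilter
  have hck_lim : Tendsto ck (U : Filter ℕ) (𝓝 m) := by
    apply Tendsto.mono_left _ hUle
    apply tendsto_of_tendsto_of_tendsto_of_le_of_le (tendsto_const_nhds) _ hck_lb
      (fun k => (hck_ub k).le)
    have : Tendsto (fun k : ℕ => m + 1/(k+1 : ℝ)) atTop (𝓝 (m + 0)) :=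
      tendsto_const_nhds.add (by
        simpa using tendsto_one_div_add_atTop_nhds_zero_nat (𝕜 := ℝ))
    simpa using this
  -- properties of the limit curve
  have hγΩ : ∀ t, γ t ∈ Ω := fun t =>
    hΩcl.mem_of_tendsto (hγt t) (Filter.Eventually.of_forall (fun k => hpΩ k t))
  have hγ0 : γ 0 ∈ V₀ :=
    hV₀cl.mem_of_tendsto (hγt 0) (Filter.Eventually.of_forall (fun k => hp0 k))
  have hγ1 : γ 1 = x := by
    have h1 : Tendsto (fun k : ℕ => p k 1) U (𝓝 x) :=
      tendsto_const_nhds.congr (fun k => (hp1 k).symm)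
    exact tendsto_nhds_unique (hγt 1) h1
  have hγdist : ∀ s t : ℝ, s ≤ t → ‖γ t - γ s‖ ≤ L * (t - s) := by
    intro s t hstle
    apply le_of_tendsto (((hγt t).sub (hγt s)).norm)
    exact Filter.Eventually.of_forall (fun k => hp_dist' k s t hstle)
  have hγlip : LipschitzWith (Real.toNNReal L) γ := by
    apply LipschitzWith.of_dist_le_mul
    intro s t
    rw [dist_eq_norm, dist_eq_norm, Real.coe_toNNReal L hL0]
    rcases le_total t s with h | h
    · rw [Real.norm_eq_abs, abs_of_nonneg (by linarith : (0:ℝ) ≤ s - t)]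
      exact hγdist t s h
    · rw [norm_sub_rev, Real.norm_eq_abs, abs_of_nonpos (by linarith : s - t ≤ 0)]
      have := hγdist s t h
      rw [neg_sub]
      exact this
  have hγadm : IsAdmissible Ω V₀ x γ := ⟨⟨_, hγlip⟩, fun u _ => hγΩ u, hγ0, hγ1⟩
  have hγclamp : ∀ t, γ t = γ (cl t) := by
    intro t
    apply tendsto_nhds_unique (hγt t)
    exact ((hγt (cl t)).congr (fun k => (hp_clamp k t).symm))
  -- uniform continuity modulus on the compact container
  have hmod : ∀ ε > (0:ℝ), ∃ δ > (0:ℝ), ∀ y ∈ Bs, ∀ z ∈ Bs, ‖y - z‖ < δ →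
      ∀ q : Euc n, σ y q ≤ σ z q + ε * ‖q‖ := by
    intro ε hε
    have hK2 : IsCompact (Bs ×ˢ closedBall (0 : Euc n) 1) :=
      hBcpt.prod (isCompact_closedBall _ _)
    have hC : ContinuousOn (fun pr : Euc n × Euc n => σ pr.1 pr.2)
        (Bs ×ˢ closedBall (0 : Euc n) 1) :=
      hσcont.mono (prod_mono (inter_subset_left) (subset_univ _))
    have hUC := hK2.uniformContinuousOn_of_continuous hC
    rw [Metric.uniformContinuousOn_iff] at hUC
    obtain ⟨δ, hδ, hUC⟩ := hUC ε hε
    refine ⟨δ, hδ, ?_⟩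
    intro y hy z hz hyz q
    rcases eq_or_ne q 0 with rfl | hq
    · rw [hσ0 y hy.1, hσ0 z hz.1]
      simp
    · have hqn : (0:ℝ) < ‖q‖ := norm_pos_iff.2 hq
      set qh : Euc n := ‖q‖⁻¹ • q with hqh
      have hqh_norm : ‖qh‖ = 1 := by
        rw [hqh, norm_smul, norm_inv, norm_norm, inv_mul_cancel₀ hqn.ne']
      have hqh_mem : qh ∈ closedBall (0 : Euc n) 1 := by
        rw [mem_closedBall, dist_zero_right, hqh_norm]
      have hd : dist (y, qh) (z, qh) < δ := by
        rw [Prod.dist_eq]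
        simp only [dist_self]
        rw [max_eq_left dist_nonneg, dist_eq_norm]
        exact hyz
      have hpair := hUC (y, qh) (mk_mem_prod hy hqh_mem) (z, qh) (mk_mem_prod hz hqh_mem) hd
      rw [Real.dist_eq] at hpair
      have h1 : σ y qh ≤ σ z qh + ε := by
        have := (abs_lt.1 hpair).2; linarith
      have hsmul : (‖q‖ : ℝ) • qh = q := by
        rw [hqh, smul_smul, mul_inv_cancel₀ hqn.ne', one_smul]
      have hy' : σ y q = ‖q‖ * σ y qh := by
        rw [← hsmul, hσhom y hy.1 qh ‖q‖ (norm_nonneg q), hsmul]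
      have hz' : σ z q = ‖q‖ * σ z qh := by
        rw [← hsmul, hσhom z hz.1 qh ‖q‖ (norm_nonneg q), hsmul]
      rw [hy', hz']
      nlinarith
  -- integral bound on total variation
  have hTV : ∀ k, ∀ a ∈ Icc (0:ℝ) 1, ∀ b ∈ Icc (0:ℝ) 1, a ≤ b →
      σl * ∫ u in a..b, ‖deriv (Γ k) u‖ ≤ F k b - F k a := by
    intro k a ha b hb hab
    rw [hF_add k a ha b hb hab]
    have h2 : (∫ u in a..b, σl * ‖deriv (Γ k) u‖) ≤ ∫ u in a..b, f k u := by
      apply intervalIntegral.integral_mono_on hab ((hnorm_int k a b).const_mul σl)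
        (hf_int k a ha b hb)
      intro u hu
      exact hnormf k u ⟨le_trans ha.1 hu.1, le_trans hu.2 hb.2⟩
    rwa [intervalIntegral.integral_const_mul] at h2
  -- the key subinterval estimate
  have hkey : ∀ (k : ℕ) (ε : ℝ), 0 < ε → ∀ a ∈ Icc (0:ℝ) 1, ∀ b ∈ Icc (0:ℝ) 1, a ≤ b →
      (∀ u ∈ Icc a b, ∀ q : Euc n, σ (Γ k a) q ≤ σ (Γ k u) q + ε * ‖q‖) →
      σ (Γ k a) (Γ k b - Γ k a) ≤ (1 + ε/σl) * (F k b - F k a) := by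
    intro k ε hε a ha b hb hab hmodu
    have haΩ := hΓΩ k a ha
    have hjen : σ (Γ k a) (Γ k b - Γ k a) ≤ ∫ u in a..b, σ (Γ k a) (deriv (Γ k) u) :=
      jensen_sublinear (hslice _ haΩ) hσu (fun q c hc => hσhom _ haΩ q c hc)
        (hσconv _ haΩ) (fun q => (hσbound _ haΩ q).2) (fun q => hσnn _ haΩ q) (hK k) hab
    have hint1 : IntervalIntegrable (fun u => σ (Γ k a) (deriv (Γ k) u)) volume a b :=
      integrandIntegrable' (hslice _ haΩ) hσu (fun q => hσabs _ haΩ q) (hK k) a b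
    have hint2 : IntervalIntegrable (fun u => f k u + ε * ‖deriv (Γ k) u‖) volume a b :=
      (hf_int k a ha b hb).add ((hnorm_int k a b).const_mul ε)
    have hmono : (∫ u in a..b, σ (Γ k a) (deriv (Γ k) u)) ≤
        ∫ u in a..b, (f k u + ε * ‖deriv (Γ k) u‖) := by
      apply intervalIntegral.integral_mono_on hab hint1 hint2
      intro u hu
      exact hmodu u hu _
    have hsplit : (∫ u in a..b, (f k u + ε * ‖deriv (Γ k) u‖)) =
        (F k b - F k a) + ε * ∫ u in a..b, ‖deriv (Γ k) u‖ := by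
      rw [intervalIntegral.integral_add (hf_int k a ha b hb) ((hnorm_int k a b).const_mul ε),
        intervalIntegral.integral_const_mul, hF_add k a ha b hb hab]
    have hTVab := hTV k a ha b hb hab
    have hFnn : 0 ≤ F k b - F k a := by
      have := hTVab
      have h0 : 0 ≤ ∫ u in a..b, ‖deriv (Γ k) u‖ :=
        intervalIntegral.integral_nonneg hab (fun u _ => norm_nonneg _)
      nlinarith
    have hstep : ε * ∫ u in a..b, ‖deriv (Γ k) u‖ ≤ (ε/σl) * (F k b - F k a) := by
      rw [div_mul_eq_mul_div, le_div_iff₀ hσl]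
      calc (ε * ∫ u in a..b, ‖deriv (Γ k) u‖) * σl
          = ε * (σl * ∫ u in a..b, ‖deriv (Γ k) u‖) := by ring
        _ ≤ ε * (F k b - F k a) := by nlinarith
        _ = ε * (F k b - F k a) := rfl
    calc σ (Γ k a) (Γ k b - Γ k a) ≤ ∫ u in a..b, σ (Γ k a) (deriv (Γ k) u) := hjen
      _ ≤ (F k b - F k a) + ε * ∫ u in a..b, ‖deriv (Γ k) u‖ := by rw [← hsplit]; exact hmono
      _ ≤ (F k b - F k a) + (ε/σl) * (F k b - F k a) := by linarith
      _ = (1 + ε/σl) * (F k b - F k a) := by ring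
  -- the pointwise bound on the limit curve
  have hbound : ∀ t ∈ Icc (0:ℝ) 1, σ (γ t) (deriv γ t) ≤ m := by
    intro t ht
    by_cases hdiff : DifferentiableAt ℝ γ t
    swap
    · rw [deriv_zero_of_not_differentiableAt hdiff, hσ0 _ (hγΩ t)]; exact hm0
    rcases eq_or_lt_of_le ht.2 with h1 | h1
    · -- t = 1 : the curve is constant to the right, so the derivative vanishes
      have hconst : ∀ u ∈ Ioi (1:ℝ), γ u = γ 1 := by
        intro u hu
        rw [hγclamp u]
        have : cl u = 1 := by
          rw [hcl]
          simp only [min_eq_left (le_of_lt (mem_Ioi.1 hu))]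
          exact max_eq_right zero_le_one
        rw [this]
      subst h1
      have hD := hdiff.hasDerivAt
      rw [hasDerivAt_iff_tendsto_slope] at hD
      have h2 : Tendsto (slope γ 1) (𝓝[>] (1:ℝ)) (𝓝 (deriv γ 1)) :=
        hD.mono_left (nhdsWithin_mono _ (fun u hu => ne_of_gt hu))
      have h3 : Tendsto (slope γ 1) (𝓝[>] (1:ℝ)) (𝓝 0) := by
        apply Tendsto.congr' _ tendsto_const_nhds
        filter_upwards [self_mem_nhdsWithin] with u hu
        rw [slope_def_module, hconst u hu, sub_self, smul_zero]
      rw [tendsto_nhds_unique h2 h3, hσ0 _ (hγΩ 1)]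
      exact hm0
    · -- t < 1 : the main estimate
      apply le_of_forall_pos_le_add
      intro ε'' hε''
      have hden : (0:ℝ) < m + 1 + σl := by linarith
      set ε : ℝ := ε'' * σl / (m + 1 + σl) with hεdef
      have hεpos : 0 < ε := div_pos (mul_pos hε'' hσl) hden
      obtain ⟨δ₀, hδ₀, hmodδ⟩ := hmod ε hεpos
      set δ : ℝ := min δ₀ 1 with hδdef
      have hδpos : 0 < δ := lt_min hδ₀ zero_lt_one
      have hδle : δ ≤ δ₀ := min_le_left _ _
      have hδ1 : δ ≤ 1 := min_le_right _ _
      set h₀ : ℝ := min (1 - t) (σl * δ / (2 * (m + 2))) with hh₀def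
      have hh₀pos : 0 < h₀ := by
        apply lt_min (by linarith)
        have : (0:ℝ) < 2 * (m + 2) := by linarith
        positivity
      -- the per-h estimate obtained as an ultrafilter limit of the per-k estimates
      have hperh : ∀ h : ℝ, 0 < h → h ≤ h₀ →
          σ (γ t) (γ (t+h) - γ t) ≤ (1 + ε/σl) * (h * m) := by
        intro h hh hhle
        have hth : t + h ∈ Icc (0:ℝ) 1 := by
          constructor
          · linarith [ht.1]
          · have : h ≤ 1 - t := le_trans hhle (min_le_left _ _)
            linarith
        have hEk : ∀ k, σ (p k t) (p k (t+h) - p k t) ≤ (1 + ε/σl) * (h * ck k) := by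
          intro k
          have hclt : cl t = t := hcl_of_mem t ht
          have hclth : cl (t+h) = t + h := hcl_of_mem _ hth
          set a : ℝ := st k (cl t) with hadef
          set b : ℝ := st k (cl (t+h)) with hbdef
          have ha : a ∈ Icc (0:ℝ) 1 := hst_mem k _ (hcl_mem t)
          have hb : b ∈ Icc (0:ℝ) 1 := hst_mem k _ (hcl_mem (t+h))
          have hab : a ≤ b := by
            apply hst_mono k _ (hcl_mem t) _ (hcl_mem (t+h))
            rw [hclt, hclth]; linarith
          have hFab : F k b - F k a = h * ck k := by
            rw [hbdef, hadef, hst_val k _ (hcl_mem (t+h)), hst_val k _ (hcl_mem t),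
              hclt, hclth]
            ring
          -- the small-increment bound
          have hsmall_gen : ∀ u ∈ Icc a b, ‖Γ k u - Γ k a‖ < δ := by
            intro u hu
            have huI : u ∈ Icc (0:ℝ) 1 := ⟨le_trans ha.1 hu.1, le_trans hu.2 hb.2⟩
            have hdau := hEuc k a ha u huI hu.1
            have hFmono : F k u - F k a ≤ F k b - F k a := by
              have h9 : 0 ≤ F k b - F k u := by
                rw [hF_add k u huI b hb hu.2]
                apply intervalIntegral.integral_nonneg hu.2
                intro w hw
                exact hf_nn k w ⟨le_trans huI.1 hw.1, le_trans hw.2 hb.2⟩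
              linarith
            have hhck : h * ck k < σl * δ := by
              have h5 : h ≤ σl * δ / (2 * (m + 2)) := le_trans hhle (min_le_right _ _)
              have h6 : ck k ≤ m + 1 := hck_ub1 k
              have h7 : (0:ℝ) < 2 * (m + 2) := by linarith
              have h8 : h * ck k ≤ (σl * δ / (2 * (m + 2))) * (m + 1) := by
                apply mul_le_mul h5 h6 (hck0 k)
                positivity
              have h10 : (σl * δ / (2 * (m + 2))) * (m + 1) < σl * δ := by
                rw [div_mul_eq_mul_div, div_lt_iff₀ h7]
                nlinarith [mul_pos hσl hδpos]
              linarith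
            have : σl * ‖Γ k u - Γ k a‖ < σl * δ := by
              calc σl * ‖Γ k u - Γ k a‖ ≤ F k u - F k a := hdau
                _ ≤ F k b - F k a := hFmono
                _ = h * ck k := hFab
                _ < σl * δ := hhck
            exact lt_of_mul_lt_mul_left this hσl.le
          -- membership of the relevant points in the compact set
          have hgaB : Γ k a ∈ Bs := by
            have : p k t = Γ k a := by rw [hp]
            rw [← this]; exact hpB k t
          have hgaball : ‖Γ k a - x‖ ≤ L := by
            have h11 := hp_ball k t
            rw [mem_closedBall, dist_eq_norm] at h11
            have h12 : p k t = Γ k a := by rw [hp]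
            rwa [h12] at h11
          have hguB : ∀ u ∈ Icc a b, Γ k u ∈ Bs := by
            intro u hu
            have huI : u ∈ Icc (0:ℝ) 1 := ⟨le_trans ha.1 hu.1, le_trans hu.2 hb.2⟩
            refine ⟨hΓΩ k u huI, ?_⟩
            rw [mem_closedBall, dist_eq_norm]
            calc ‖Γ k u - x‖ ≤ ‖Γ k u - Γ k a‖ + ‖Γ k a - x‖ := norm_sub_le_norm_sub_add_norm_sub _ _ _
              _ ≤ δ + L := by
                  have := (hsmall_gen u hu).le
                  linarith
              _ ≤ L + 2 := by linarith
          -- the modulus hypothesis for hkey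
          have hmm : ∀ u ∈ Icc a b, ∀ q : Euc n, σ (Γ k a) q ≤ σ (Γ k u) q + ε * ‖q‖ := by
            intro u hu q
            apply hmodδ (Γ k a) hgaB (Γ k u) (hguB u hu)
            rw [norm_sub_rev]
            exact lt_of_lt_of_le (hsmall_gen u hu) hδle
          have hres := hkey k ε hεpos a ha b hb hab hmm
          rw [hFab] at hres
          have hpa : p k t = Γ k a := by rw [hp]
          have hpb : p k (t+h) = Γ k b := by rw [hp]
          rw [hpa, hpb]
          exact hres
        -- pass to the ultrafilter limit
        have hpair : Tendsto (fun k => ((p k t : Euc n), p k (t+h) - p k t)) U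
            (𝓝 (γ t, γ (t+h) - γ t)) :=
          (hγt t).prodMk_nhds ((hγt (t+h)).sub (hγt t))
        have hcw : ContinuousWithinAt (fun pr : Euc n × Euc n => σ pr.1 pr.2)
            (Ω ×ˢ (univ : Set (Euc n))) (γ t, γ (t+h) - γ t) :=
          hσcont _ ⟨hγΩ t, mem_univ _⟩
        have hpair' : Tendsto (fun k => ((p k t : Euc n), p k (t+h) - p k t)) U
            (𝓝[Ω ×ˢ (univ : Set (Euc n))] (γ t, γ (t+h) - γ t)) := by
          rw [tendsto_nhdsWithin_iff]
          exact ⟨hpair, Filter.Eventually.of_forall (fun k => ⟨hpΩ k t, mem_univ _⟩)⟩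
        have hlhs : Tendsto (fun k => σ (p k t) (p k (t+h) - p k t)) U
            (𝓝 (σ (γ t) (γ (t+h) - γ t))) := by
          have := hcw.tendsto.comp hpair'
          exact this
        have hrhs : Tendsto (fun k => (1 + ε/σl) * (h * ck k)) U
            (𝓝 ((1 + ε/σl) * (h * m))) := ((hck_lim.const_mul h).const_mul _)
        exact le_of_tendsto_of_tendsto' hlhs hrhs hEk
      -- divide by h
      have hquot : ∀ h : ℝ, 0 < h → h ≤ h₀ →
          σ (γ t) (h⁻¹ • (γ (t+h) - γ t)) ≤ (1 + ε/σl) * m := by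
        intro h hh hhle
        rw [hσhom _ (hγΩ t) _ _ (inv_nonneg.2 hh.le)]
        have h2 : h⁻¹ * σ (γ t) (γ (t+h) - γ t) ≤ h⁻¹ * ((1 + ε/σl) * (h * m)) :=
          mul_le_mul_of_nonneg_left (hperh h hh hhle) (inv_nonneg.2 hh.le)
        calc h⁻¹ * σ (γ t) (γ (t+h) - γ t) ≤ h⁻¹ * ((1 + ε/σl) * (h * m)) := h2
          _ = (1 + ε/σl) * m := by field_simp
      -- let h → 0 along a sequence
      set e : ℕ → ℝ := fun j => h₀ / (j+1) with hedef
      have he : ∀ j, 0 < e j := fun j => by positivity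
      have helim : Tendsto e atTop (𝓝 0) := by
        have h3 : Tendsto (fun j : ℕ => h₀ * (1/(j+1) : ℝ)) atTop (𝓝 (h₀ * 0)) :=
          tendsto_const_nhds.mul tendsto_one_div_add_atTop_nhds_zero_nat
        rw [mul_zero] at h3
        apply h3.congr
        intro j; rw [hedef]; ring
      have he_le : ∀ j, e j ≤ h₀ := by
        intro j
        rw [hedef]
        apply div_le_self hh₀pos.le
        have : (0:ℝ) ≤ (j:ℝ) := Nat.cast_nonneg j
        linarith
      have hqlim : Tendsto (fun j => σ (γ t) ((e j)⁻¹ • (γ (t + e j) - γ t))) atTop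
          (𝓝 (σ (γ t) (deriv γ t))) :=
        ((hslice _ (hγΩ t)).tendsto (deriv γ t)).comp (diffQuot_tendsto hdiff he helim)
      have hfin : σ (γ t) (deriv γ t) ≤ (1 + ε/σl) * m :=
        le_of_tendsto hqlim (Filter.Eventually.of_forall (fun j => hquot (e j) (he j) (he_le j)))
      -- final arithmetic
      have harith : (1 + ε/σl) * m ≤ m + ε'' := by
        have hεσ : ε / σl = ε'' / (m + 1 + σl) := by
          rw [hεdef]
          field_simp
        have h20 : (1 + ε/σl) * m = m + (ε'' / (m + 1 + σl)) * m := by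
          rw [hεσ]; ring
        have h21 : (ε'' / (m + 1 + σl)) * m ≤ ε'' := by
          rw [div_mul_eq_mul_div, div_le_iff₀ hden]
          nlinarith
        linarith
      linarith
  -- conclusion
  have hγint : IntervalIntegrable (fun u => σ (γ u) (deriv γ u)) volume 0 1 :=
    integrandIntegrable hσcont hσu hσabs hγlip (fun u _ => hγΩ u)
      ⟨le_rfl, zero_le_one⟩ ⟨zero_le_one, le_rfl⟩
  have hupper : curveCost σ γ ≤ m := by
    rw [curveCost]
    calc (∫ u in (0:ℝ)..1, σ (γ u) (deriv γ u)) ≤ ∫ _u in (0:ℝ)..1, m :=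
          intervalIntegral.integral_mono_on zero_le_one hγint intervalIntegrable_const hbound
      _ = m := by simp
  have hlower : m ≤ curveCost σ γ := by
    rw [hm_eq]
    exact csInf_le hSbdd ⟨γ, hγadm, rfl⟩
  exact ⟨γ, hγadm, le_antisymm hupper hlower⟩
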